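/- For the rolling equations on the curved part of 𝒩 (Proposition 6.2), the transversal kinetic energy E₁ = (m/2)(v₁² + v₂² + S₁₂²) is a conserved quantity: if v₁, v₂, S₁₂ satisfy v̇₁ = −f_c v₂² − η f_s v₂ S₁₂, v̇₂ = f_c v₁ v₂ − (η/r) v₁ S₁₂, Ṡ₁₂ = η(f_s + 1/r) v₁ v₂, then d/dt (v₁² + v₂² + S₁₂²) = 0. -/

import Mathlib

theorem transversal_energy_conserved
    (f_c f_s : ℝ → ℝ) (η r : ℝ) (hη : 0 < η) (hr : 0 < r)
    (v₁ v₂ S₁₂ : ℝ → ℝ)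
    (h₁ : ∀ t, HasDerivAt v₁ (-(f_c t * v₂ t ^ 2) - η * f_s t * v₂ t * S₁₂ t) t)
    (h₂ : ∀ t, HasDerivAt v₂ (f_c t * v₁ t * v₂ t - (η / r) * v₁ t * S₁₂ t) t)
    (h₃ : ∀ t, HasDerivAt S₁₂ (η * (f_s t + 1 / r) * v₁ t * v₂ t) t) :
    ∀ t, HasDerivAt (fun τ => v₁ τ ^ 2 + v₂ τ ^ 2 + S₁₂ τ ^ 2) 0 t := by
  intro t
  have h := (((h₁ t).pow 2).add ((h₂ t).pow 2)).add ((h₃ t).pow 2)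
  refine HasDerivAt.congr_deriv h ?_
  have : (r : ℝ) ≠ 0 := hr.ne'
  push_cast
  ring
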